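/- Let Θ, Φ ⊆ ℝ^d be open sets, let F : Θ → ℝ^d be differentiable, let h : ℝ^d → ℝ be any function, and let g : Θ → Φ be a bijective differentiable map whose inverse g⁻¹ : Φ → Θ is differentiable. Define F̂ = F ∘ g⁻¹ on Φ, and define π(θ) = |det DF(θ)| · h(F(θ)) on Θ and π̂(φ) = |det DF̂(φ)| · h(F̂(φ)) on Φ, where DF denotes the (Fréchet) derivative. Then for every θ ∈ Θ, π(θ) = π̂(g(θ)) · |det Dg(θ)|. (This is the invariance of the multivariate WCP prior under reparameterization: the prior density for φ = g(θ) is obtained from the prior density for θ by the multivariate change-of-variables formula.) -/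

import Mathlib

open Set

/-- Invariance of the multivariate WCP prior under reparameterization: for open sets
`Θ, Φ ⊆ ℝ^d`, a differentiable `F : Θ → ℝ^d`, an arbitrary `h : ℝ^d → ℝ`, and a bijective
differentiable map `g : Θ → Φ` with differentiable inverse `ginv`, setting `F̂ = F ∘ ginv`,
the densities `π(θ) = |det DF(θ)| ⬝ h(F(θ))` and `π̂(φ) = |det DF̂(φ)| ⬝ h(F̂(φ))` satisfy
`π(θ) = π̂(g(θ)) ⬝ |det Dg(θ)|` for every `θ ∈ Θ`. -/
theorem stmt_7 {d : ℕ} (Θ Φ : Set (EuclideanSpace ℝ (Fin d)))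
    (hΘ : IsOpen Θ) (hΦ : IsOpen Φ)
    (F : EuclideanSpace ℝ (Fin d) → EuclideanSpace ℝ (Fin d))
    (h : EuclideanSpace ℝ (Fin d) → ℝ)
    (g ginv : EuclideanSpace ℝ (Fin d) → EuclideanSpace ℝ (Fin d))
    (hF : ∀ x ∈ Θ, DifferentiableAt ℝ F x)
    (hgmap : MapsTo g Θ Φ) (hginvmap : MapsTo ginv Φ Θ)
    (hleft : ∀ x ∈ Θ, ginv (g x) = x) (hright : ∀ y ∈ Φ, g (ginv y) = y)
    (hgdiff : ∀ x ∈ Θ, DifferentiableAt ℝ g x)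
    (hginvdiff : ∀ y ∈ Φ, DifferentiableAt ℝ ginv y) :
    ∀ θ ∈ Θ,
      |(fderiv ℝ F θ).det| * h (F θ) =
      (|(fderiv ℝ (F ∘ ginv) (g θ)).det| * h ((F ∘ ginv) (g θ))) *
        |(fderiv ℝ g θ).det| := by
  intro θ hθ
  have hθΦ := hgmap hθ
  have hginvg : ginv (g θ) = θ := hleft θ hθ
  have hdg := hgdiff θ hθ
  have hdginv := hginvdiff (g θ) hθΦ
  have hdF := hF θ hθ
  have hev : (ginv ∘ g) =ᶠ[nhds θ] id := by
    filter_upwards [hΘ.mem_nhds hθ] with x hx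
    exact hleft x hx
  have hid : (fderiv ℝ ginv (g θ)).comp (fderiv ℝ g θ) = ContinuousLinearMap.id ℝ _ := by
    have h1 : fderiv ℝ (ginv ∘ g) θ = (fderiv ℝ ginv (g θ)).comp (fderiv ℝ g θ) :=
      fderiv_comp θ hdginv hdg
    rw [← h1, hev.fderiv_eq, fderiv_id]
  have hcomp : fderiv ℝ (F ∘ ginv) (g θ) = (fderiv ℝ F θ).comp (fderiv ℝ ginv (g θ)) := by
    have h2 := fderiv_comp (g θ) (show DifferentiableAt ℝ F (ginv (g θ)) by
      rw [hginvg]; exact hdF) hdginv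
    rw [hginvg] at h2; exact h2
  have hdet : (fderiv ℝ ginv (g θ)).det * (fderiv ℝ g θ).det = 1 := by
    have h3 := congrArg ContinuousLinearMap.det hid
    simpa [ContinuousLinearMap.det, LinearMap.det_comp] using h3
  have hFval : (F ∘ ginv) (g θ) = F θ := by simp [Function.comp, hginvg]
  have hdet2 : ((fderiv ℝ F θ).comp (fderiv ℝ ginv (g θ))).det
      = (fderiv ℝ F θ).det * (fderiv ℝ ginv (g θ)).det := by
    simp [ContinuousLinearMap.det, LinearMap.det_comp]
  have habs : |(fderiv ℝ ginv (g θ)).det| * |(fderiv ℝ g θ).det| = 1 := by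
    rw [← abs_mul, hdet]; exact abs_one
  rw [hcomp, hFval, hdet2, abs_mul]
  calc |(fderiv ℝ F θ).det| * h (F θ)
      = |(fderiv ℝ F θ).det| * h (F θ) *
        (|(fderiv ℝ ginv (g θ)).det| * |(fderiv ℝ g θ).det|) := by rw [habs, mul_one]
    _ = |(fderiv ℝ F θ).det| * |(fderiv ℝ ginv (g θ)).det| * h (F θ) *
        |(fderiv ℝ g θ).det| := by ring
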